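/- Let A1, A2, A3 : I → ℂ be differentiable functions on an open set I solving the Darboux–Halphen system ∂_t A_i = −A_j A_k + A_i(A_j + A_k) for every cyclic permutation (i, j, k) of (1, 2, 3). Fix q0 such that t + q0 ≠ 0 on I, and define Ω_i(t) := 1/(t + q0) + A_i(t). Then Ω1, Ω2, Ω3 satisfy the coupled linear system ∂_t Ω_i = −Ω_j Ω_k + Ω_i (A_j + A_k) for every cyclic permutation (i, j, k) of (1, 2, 3). -/

import Mathlib

lemma deriv_shift_aux (A : ℂ → ℂ) (q0 t : ℂ) (hA : DifferentiableAt ℂ A t)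
    (ht : t + q0 ≠ 0) :
    deriv (fun s => (s + q0)⁻¹ + A s) t = -((t + q0)^2)⁻¹ + deriv A t := by
  have hh : HasDerivAt (fun s : ℂ => (s + q0)⁻¹) (-1 / (t + q0)^2) t := by
    have h0 : HasDerivAt (fun s : ℂ => s + q0) 1 t :=
      (hasDerivAt_id t).add_const q0
    simpa using h0.fun_inv ht
  rw [deriv_fun_add hh.differentiableAt hA, hh.deriv]
  field_simp

/-- If A₁, A₂, A₃ solve the Darboux–Halphen system and Ωᵢ(t) = 1/(t+q₀) + Aᵢ(t), then
the Ωᵢ satisfy the coupled system ∂ₜΩᵢ = −ΩⱼΩₖ + Ωᵢ(Aⱼ + Aₖ). -/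
theorem darboux_halphen_shifted_solution
    (I : Set ℂ) (hI : IsOpen I)
    (A1 A2 A3 : ℂ → ℂ)
    (hA1 : DifferentiableOn ℂ A1 I)
    (hA2 : DifferentiableOn ℂ A2 I)
    (hA3 : DifferentiableOn ℂ A3 I)
    (hDH1 : ∀ t ∈ I, deriv A1 t = -(A2 t * A3 t) + A1 t * (A2 t + A3 t))
    (hDH2 : ∀ t ∈ I, deriv A2 t = -(A3 t * A1 t) + A2 t * (A3 t + A1 t))
    (hDH3 : ∀ t ∈ I, deriv A3 t = -(A1 t * A2 t) + A3 t * (A1 t + A2 t))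
    (q0 : ℂ) (hq0 : ∀ t ∈ I, t + q0 ≠ 0)
    (Ω1 Ω2 Ω3 : ℂ → ℂ)
    (hΩ1 : ∀ t, Ω1 t = (t + q0)⁻¹ + A1 t)
    (hΩ2 : ∀ t, Ω2 t = (t + q0)⁻¹ + A2 t)
    (hΩ3 : ∀ t, Ω3 t = (t + q0)⁻¹ + A3 t) :
    ∀ t ∈ I,
      (deriv Ω1 t = -(Ω2 t * Ω3 t) + Ω1 t * (A2 t + A3 t)) ∧
      (deriv Ω2 t = -(Ω3 t * Ω1 t) + Ω2 t * (A3 t + A1 t)) ∧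
      (deriv Ω3 t = -(Ω1 t * Ω2 t) + Ω3 t * (A1 t + A2 t)) := by
  intro t ht
  have hE1 : Ω1 = fun s => (s + q0)⁻¹ + A1 s := funext hΩ1
  have hE2 : Ω2 = fun s => (s + q0)⁻¹ + A2 s := funext hΩ2
  have hE3 : Ω3 = fun s => (s + q0)⁻¹ + A3 s := funext hΩ3
  have ht0 := hq0 t ht
  have hd1 := (hA1 t ht).differentiableAt (hI.mem_nhds ht)
  have hd2 := (hA2 t ht).differentiableAt (hI.mem_nhds ht)
  have hd3 := (hA3 t ht).differentiableAt (hI.mem_nhds ht)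
  have key : ((t + q0)^2)⁻¹ = (t + q0)⁻¹ * (t + q0)⁻¹ := by
    rw [sq, mul_inv]
  refine ⟨?_, ?_, ?_⟩
  · rw [hE1, deriv_shift_aux A1 q0 t hd1 ht0, hDH1 t ht, key]; simp only [hΩ1, hΩ2, hΩ3]; ring
  · rw [hE2, deriv_shift_aux A2 q0 t hd2 ht0, hDH2 t ht, key]; simp only [hΩ1, hΩ2, hΩ3]; ring
  · rw [hE3, deriv_shift_aux A3 q0 t hd3 ht0, hDH3 t ht, key]; simp only [hΩ1, hΩ2, hΩ3]; ring
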